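/- Let g be a symmetric (0,2)-tensor field on ℝ×(0,∞)×(0,2π)×(0,π) with coordinates (t,r,φ,ϑ), satisfying the Killing equations for the three rotation generators ξ = ∂/∂φ, ζ = −sin φ ∂/∂ϑ − cot ϑ cos φ ∂/∂φ, λ = cos φ ∂/∂ϑ − cot ϑ sin φ ∂/∂φ (acting only in the (φ,ϑ) variables). Then g_{tφ} = g_{tϑ} = g_{rφ} = g_{rϑ} = g_{φϑ} = 0, the components g_{tt}, g_{tr}, g_{rr} depend only on (t,r), and there is a function Q(t,r) with g_{ϑϑ} = Q and g_{φφ} = Q sin²ϑ. -/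

import Mathlib

open scoped BigOperators

/-- Partial derivative of a real function on `ℝ⁴` in the `j`-th coordinate direction. -/
noncomputable def pd (f : (Fin 4 → ℝ) → ℝ) (j : Fin 4) (x : Fin 4 → ℝ) : ℝ :=
  fderiv ℝ f x (Pi.single j 1)

/-- The domain `ℝ × (0,∞) × (0,2π) × (0,π)` in `(t, r, φ, ϑ)`-space. -/
def sphDom4 : Set (Fin 4 → ℝ) :=
  {p | 0 < p 1 ∧ p 2 ∈ Set.Ioo 0 (2 * Real.pi) ∧ p 3 ∈ Set.Ioo 0 Real.pi}

/-- The Killing equation for a vector field `ξ` and a `(0,2)`-tensor `G` on `sphDom4`. -/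
def KillingEq4 (G : (Fin 4 → ℝ) → Matrix (Fin 4) (Fin 4) ℝ)
    (ξ : (Fin 4 → ℝ) → (Fin 4 → ℝ)) : Prop :=
  ∀ p ∈ sphDom4, ∀ k l : Fin 4,
    (∑ m, pd (fun q => G q k l) m p * ξ p m)
      + (∑ i, G p i l * pd (fun q => ξ q i) k p)
      + (∑ j, G p k j * pd (fun q => ξ q j) l p) = 0

@[simp] lemma pd_const (c : ℝ) (j : Fin 4) (p : Fin 4 → ℝ) : pd (fun _ => c) j p = 0 := by
  simp [pd]

lemma hasFDerivAt_coord (i : Fin 4) (p : Fin 4 → ℝ) :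
    HasFDerivAt (fun q : Fin 4 → ℝ => q i)
      (ContinuousLinearMap.proj (R := ℝ) (φ := fun _ : Fin 4 => ℝ) i) p :=
  (ContinuousLinearMap.proj (R := ℝ) (φ := fun _ : Fin 4 => ℝ) i).hasFDerivAt

lemma hasFDerivAt_cot (p : Fin 4 → ℝ) (hs3 : Real.sin (p 3) ≠ 0) :
    HasFDerivAt (fun q : Fin 4 → ℝ => Real.cos (q 3) / Real.sin (q 3))
      (((-Real.sin (p 3) * Real.sin (p 3) - Real.cos (p 3) * Real.cos (p 3)) / Real.sin (p 3) ^ 2)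
        • ContinuousLinearMap.proj (R := ℝ) (φ := fun _ : Fin 4 => ℝ) 3) p := by
  have hf : HasDerivAt (fun x : ℝ => Real.cos x / Real.sin x)
      ((-Real.sin (p 3) * Real.sin (p 3) - Real.cos (p 3) * Real.cos (p 3)) / Real.sin (p 3) ^ 2)
      (p 3) := (Real.hasDerivAt_cos _).div (Real.hasDerivAt_sin _) hs3
  exact hf.comp_hasFDerivAt p (hasFDerivAt_coord 3 p)

lemma key_zeta2 (p : Fin 4 → ℝ) (hs3 : Real.sin (p 3) ≠ 0) (j : Fin 4) :
    pd (fun q => -(Real.cos (q 3) / Real.sin (q 3)) * Real.cos (q 2)) j p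
      = (Real.cos (p 3) * Real.sin (p 2) / Real.sin (p 3)) * ((Pi.single j 1 : Fin 4 → ℝ) 2)
        + (Real.cos (p 2) / Real.sin (p 3) ^ 2) * ((Pi.single j 1 : Fin 4 → ℝ) 3) := by
  have h1 : Real.sin (p 3) ^ 2 + Real.cos (p 3) ^ 2 = 1 := Real.sin_sq_add_cos_sq _
  have H := ((hasFDerivAt_cot p hs3).neg).mul (hasFDerivAt_coord 2 p).cos
  have hfe : (fun q : Fin 4 → ℝ => -(Real.cos (q 3) / Real.sin (q 3)) * Real.cos (q 2))
      = (-fun q : Fin 4 → ℝ => Real.cos (q 3) / Real.sin (q 3)) * fun x => Real.cos (x 2) := by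
    funext q; simp only [Pi.mul_apply, Pi.neg_apply]
  rw [pd, hfe, H.fderiv]
  simp only [ContinuousLinearMap.add_apply, ContinuousLinearMap.smul_apply,
    ContinuousLinearMap.neg_apply, ContinuousLinearMap.proj_apply, smul_eq_mul, Pi.neg_apply]
  field_simp
  linear_combination (Real.cos (p 2) * (Pi.single j 1 : Fin 4 → ℝ) 3) * h1

lemma key_zeta3 (p : Fin 4 → ℝ) (j : Fin 4) :
    pd (fun q => -Real.sin (q 2)) j p
      = -Real.cos (p 2) * ((Pi.single j 1 : Fin 4 → ℝ) 2) := by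
  have H := (hasFDerivAt_coord 2 p).sin.neg
  have hfe : (fun q : Fin 4 → ℝ => -Real.sin (q 2)) = -fun x : Fin 4 → ℝ => Real.sin (x 2) := by
    funext q; simp only [Pi.neg_apply]
  rw [pd, hfe, H.fderiv]
  simp [smul_eq_mul]

lemma key_lam2 (p : Fin 4 → ℝ) (hs3 : Real.sin (p 3) ≠ 0) (j : Fin 4) :
    pd (fun q => -(Real.cos (q 3) / Real.sin (q 3)) * Real.sin (q 2)) j p
      = (-(Real.cos (p 3) * Real.cos (p 2)) / Real.sin (p 3)) * ((Pi.single j 1 : Fin 4 → ℝ) 2)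
        + (Real.sin (p 2) / Real.sin (p 3) ^ 2) * ((Pi.single j 1 : Fin 4 → ℝ) 3) := by
  have h1 : Real.sin (p 3) ^ 2 + Real.cos (p 3) ^ 2 = 1 := Real.sin_sq_add_cos_sq _
  have H := ((hasFDerivAt_cot p hs3).neg).mul (hasFDerivAt_coord 2 p).sin
  have hfe : (fun q : Fin 4 → ℝ => -(Real.cos (q 3) / Real.sin (q 3)) * Real.sin (q 2))
      = (-fun q : Fin 4 → ℝ => Real.cos (q 3) / Real.sin (q 3)) * fun x => Real.sin (x 2) := by
    funext q; simp only [Pi.mul_apply, Pi.neg_apply]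
  rw [pd, hfe, H.fderiv]
  simp only [ContinuousLinearMap.add_apply, ContinuousLinearMap.smul_apply,
    ContinuousLinearMap.neg_apply, ContinuousLinearMap.proj_apply, smul_eq_mul, Pi.neg_apply]
  field_simp
  linear_combination (Real.sin (p 2) * (Pi.single j 1 : Fin 4 → ℝ) 3) * h1

lemma key_lam3 (p : Fin 4 → ℝ) (j : Fin 4) :
    pd (fun q => Real.cos (q 2)) j p
      = -Real.sin (p 2) * ((Pi.single j 1 : Fin 4 → ℝ) 2) := by
  have H := (hasFDerivAt_coord 2 p).cos
  rw [pd, H.fderiv]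
  simp [smul_eq_mul]

lemma pointwise_facts (G : (Fin 4 → ℝ) → Matrix (Fin 4) (Fin 4) ℝ)
    (hsymm : ∀ p ∈ sphDom4, ∀ k l : Fin 4, G p k l = G p l k)
    (hξ : KillingEq4 G fun _ => ![0, 0, 1, 0])
    (hζ : KillingEq4 G fun p =>
      ![0, 0, -(Real.cos (p 3) / Real.sin (p 3)) * Real.cos (p 2), -Real.sin (p 2)])
    (hlam : KillingEq4 G fun p =>
      ![0, 0, -(Real.cos (p 3) / Real.sin (p 3)) * Real.sin (p 2), Real.cos (p 2)])
    (p : Fin 4 → ℝ) (hp : p ∈ sphDom4) :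
    (∀ k l : Fin 4, pd (fun q => G q k l) 2 p = 0) ∧
    G p 0 2 = 0 ∧ G p 0 3 = 0 ∧ G p 1 2 = 0 ∧ G p 1 3 = 0 ∧ G p 2 3 = 0 ∧
    G p 2 2 = G p 3 3 * Real.sin (p 3) ^ 2 ∧
    pd (fun q => G q 0 0) 3 p = 0 ∧ pd (fun q => G q 0 1) 3 p = 0 ∧
    pd (fun q => G q 1 1) 3 p = 0 ∧ pd (fun q => G q 3 3) 3 p = 0 := by
  have hs3 : Real.sin (p 3) ≠ 0 :=
    ne_of_gt (Real.sin_pos_of_pos_of_lt_pi hp.2.2.1 hp.2.2.2)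
  have h2p : Real.sin (p 2) ^ 2 + Real.cos (p 2) ^ 2 = 1 := Real.sin_sq_add_cos_sq _
  have E2 : ∀ k l : Fin 4, pd (fun q => G q k l) 2 p = 0 := by
    intro k l; have h := hξ p hp k l; simpa [Fin.sum_univ_four] using h
  have hz00 := hζ p hp 0 0
  have hz01 := hζ p hp 0 1
  have hz11 := hζ p hp 1 1
  have hz02 := hζ p hp 0 2
  have hz03 := hζ p hp 0 3
  have hz12 := hζ p hp 1 2
  have hz13 := hζ p hp 1 3
  have hz23 := hζ p hp 2 3
  have hz33 := hζ p hp 3 3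
  have hl00 := hlam p hp 0 0
  have hl01 := hlam p hp 0 1
  have hl11 := hlam p hp 1 1
  have hl02 := hlam p hp 0 2
  have hl03 := hlam p hp 0 3
  have hl12 := hlam p hp 1 2
  have hl13 := hlam p hp 1 3
  have hl23 := hlam p hp 2 3
  have hl33 := hlam p hp 3 3
  simp only [Fin.sum_univ_four, Matrix.cons_val_zero, Matrix.cons_val_one, Matrix.head_cons,
    Matrix.cons_val_two, Matrix.tail_cons, Matrix.cons_val_three]
    at hz00 hz01 hz11 hz02 hz03 hz12 hz13 hz23 hz33 hl00 hl01 hl11 hl02 hl03 hl12 hl13 hl23 hl33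
  simp only [key_zeta2 p hs3, key_zeta3 p, key_lam2 p hs3, key_lam3 p, E2, pd_const]
    at hz00 hz01 hz11 hz02 hz03 hz12 hz13 hz23 hz33 hl00 hl01 hl11 hl02 hl03 hl12 hl13 hl23 hl33
  simp only [Pi.single_apply]
    at hz00 hz01 hz11 hz02 hz03 hz12 hz13 hz23 hz33 hl00 hl01 hl11 hl02 hl03 hl12 hl13 hl23 hl33
  norm_num [show ((3:Fin 4) = 0) = False from by decide, show ((3:Fin 4) = 2) = False from by decide,
    show ((2:Fin 4) = 0) = False from by decide, show ((2:Fin 4) = 3) = False from by decide,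
    show ((3:Fin 4) = 1) = False from by decide, show ((2:Fin 4) = 1) = False from by decide]
    at hz00 hz01 hz11 hz02 hz03 hz12 hz13 hz23 hz33 hl00 hl01 hl11 hl02 hl03 hl12 hl13 hl23 hl33
  field_simp at hz02 hz03 hz12 hz13 hz23 hz33 hl02 hl03 hl12 hl13 hl23 hl33
  rw [hsymm p hp 3 2] at hz33 hl33
  -- off-diagonal vanishing
  have ha02 : G p 0 2 = 0 := by
    linear_combination Real.cos (p 2) * hz03 + Real.sin (p 2) * hl03 - G p 0 2 * h2p
  have ha12 : G p 1 2 = 0 := by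
    linear_combination Real.cos (p 2) * hz13 + Real.sin (p 2) * hl13 - G p 1 2 * h2p
  have ha03 : G p 0 3 = 0 := by
    have hmul : G p 0 3 * Real.sin (p 3) = 0 := by
      linear_combination (-Real.cos (p 2)) * hz02 - Real.sin (p 2) * hl02
        - (G p 0 3 * Real.sin (p 3)) * h2p
    exact (mul_eq_zero.mp hmul).resolve_right hs3
  have ha13 : G p 1 3 = 0 := by
    have hmul : G p 1 3 * Real.sin (p 3) = 0 := by
      linear_combination (-Real.cos (p 2)) * hz12 - Real.sin (p 2) * hl12
        - (G p 1 3 * Real.sin (p 3)) * h2p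
    exact (mul_eq_zero.mp hmul).resolve_right hs3
  have ha23 : G p 2 3 = 0 := by
    linear_combination (Real.cos (p 2) / 2) * hz33 + (Real.sin (p 2) / 2) * hl33
      - G p 2 3 * h2p
  have hx33 : pd (fun q => G q 3 3) 3 p = 0 := by
    have hmul : pd (fun q => G q 3 3) 3 p * Real.sin (p 3) ^ 2 = 0 := by
      linear_combination (-Real.sin (p 2)) * hz33 + Real.cos (p 2) * hl33
        - (pd (fun q => G q 3 3) 3 p * Real.sin (p 3) ^ 2) * h2p
    exact (mul_eq_zero.mp hmul).resolve_right (pow_ne_zero 2 hs3)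
  have ha22 : G p 2 2 = G p 3 3 * Real.sin (p 3) ^ 2 := by
    have hmul : (G p 2 2 - G p 3 3 * Real.sin (p 3) ^ 2) * Real.sin (p 3) = 0 := by
      linear_combination Real.sin (p 3) * (Real.cos (p 2) * hz23 + Real.sin (p 2) * hl23)
        - ((G p 2 2 - G p 3 3 * Real.sin (p 3) ^ 2) * Real.sin (p 3)) * h2p
    have := (mul_eq_zero.mp hmul).resolve_right hs3
    linarith [this]
  have hx00 : pd (fun q => G q 0 0) 3 p = 0 := by
    rcases hz00 with h | h
    · exact h
    · rcases hl00 with h' | h'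
      · exact h'
      · exfalso; rw [h, h'] at h2p; norm_num at h2p
  have hx01 : pd (fun q => G q 0 1) 3 p = 0 := by
    rcases hz01 with h | h
    · exact h
    · rcases hl01 with h' | h'
      · exact h'
      · exfalso; rw [h, h'] at h2p; norm_num at h2p
  have hx11 : pd (fun q => G q 1 1) 3 p = 0 := by
    rcases hz11 with h | h
    · exact h
    · rcases hl11 with h' | h'
      · exact h'
      · exfalso; rw [h, h'] at h2p; norm_num at h2p
  exact ⟨E2, ha02, ha03, ha12, ha13, ha23, ha22, hx00, hx01, hx11, hx33⟩

lemma seg_lo {lo a b s : ℝ} (ha : lo < a) (hb : lo < b) (hs0 : 0 ≤ s) (hs1 : s ≤ 1) :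
    lo < a + s * (b - a) := by
  rcases eq_or_lt_of_le hs0 with h | h
  · simpa [← h] using ha
  · nlinarith [mul_pos h (sub_pos.mpr hb), mul_nonneg (sub_nonneg.mpr hs1) (sub_pos.mpr ha).le]

lemma seg_hi {hi a b s : ℝ} (ha : a < hi) (hb : b < hi) (hs0 : 0 ≤ s) (hs1 : s ≤ 1) :
    a + s * (b - a) < hi := by
  rcases eq_or_lt_of_le hs0 with h | h
  · simpa [← h] using ha
  · nlinarith [mul_pos h (sub_pos.mpr hb), mul_nonneg (sub_nonneg.mpr hs1) (sub_pos.mpr ha).le]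

lemma const23 (f : (Fin 4 → ℝ) → ℝ)
    (hf : ∀ p ∈ sphDom4, DifferentiableAt ℝ f p)
    (h2 : ∀ p ∈ sphDom4, pd f 2 p = 0) (h3 : ∀ p ∈ sphDom4, pd f 3 p = 0)
    {p q : Fin 4 → ℝ} (hp : p ∈ sphDom4) (hq : q ∈ sphDom4)
    (h0 : q 0 = p 0) (h1 : q 1 = p 1) : f q = f p := by
  set γ : ℝ → (Fin 4 → ℝ) := fun s j => p j + s * (q j - p j) with hγ
  have hmem : ∀ s ∈ Set.Icc (0:ℝ) 1, γ s ∈ sphDom4 := by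
    rintro s ⟨hs0, hs1⟩
    obtain ⟨hp1, hp2, hp3⟩ := hp
    obtain ⟨hq1, hq2, hq3⟩ := hq
    exact ⟨seg_lo hp1 hq1 hs0 hs1,
      ⟨seg_lo hp2.1 hq2.1 hs0 hs1, seg_hi hp2.2 hq2.2 hs0 hs1⟩,
      ⟨seg_lo hp3.1 hq3.1 hs0 hs1, seg_hi hp3.2 hq3.2 hs0 hs1⟩⟩
  have hγd : ∀ s : ℝ, HasDerivAt γ (fun j => q j - p j) s := by
    intro s
    rw [hasDerivAt_pi]
    intro j
    have hj := ((hasDerivAt_id s).mul_const (q j - p j)).const_add (p j)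
    rw [one_mul] at hj
    exact hj
  have hderiv : ∀ s ∈ Set.Icc (0:ℝ) 1, HasDerivAt (fun u => f (γ u)) 0 s := by
    intro s hs
    have hfd := (hf (γ s) (hmem s hs)).hasFDerivAt
    have H := hfd.comp_hasDerivAt s (hγd s)
    have hv : (fun j => q j - p j)
        = (q 2 - p 2) • (Pi.single 2 (1:ℝ) : Fin 4 → ℝ) + (q 3 - p 3) • (Pi.single 3 (1:ℝ) : Fin 4 → ℝ) := by
      funext j
      fin_cases j <;> simp [Pi.single_apply, h0, h1]
    rw [hv] at H
    have H2 : HasDerivAt (f ∘ γ) 0 s := by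
      simpa [map_add, map_smul, show fderiv ℝ f (γ s) (Pi.single 2 1) = 0 from h2 _ (hmem s hs),
        show fderiv ℝ f (γ s) (Pi.single 3 1) = 0 from h3 _ (hmem s hs)] using H
    exact H2
  have hcont : ContinuousOn (fun u => f (γ u)) (Set.Icc 0 1) :=
    fun s hs => (hderiv s hs).continuousAt.continuousWithinAt
  have := constant_of_has_deriv_right_zero hcont
    (fun s hs => (hderiv s (Set.mem_Icc_of_Ico hs)).hasDerivWithinAt) 1
    ⟨zero_le_one, le_refl 1⟩
  have hγ0 : γ 0 = p := by funext j; simp [hγ]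
  have hγ1 : γ 1 = q := by funext j; simp [hγ]
  rw [hγ0, hγ1] at this
  exact this


/-- a symmetric `(0,2)`-tensor field on `ℝ×(0,∞)×(0,2π)×(0,π)` (coordinates
`(t,r,φ,ϑ)`) satisfying the Killing equations for the three rotation generators
`ξ = ∂/∂φ`, `ζ = −sin φ ∂/∂ϑ − cot ϑ cos φ ∂/∂φ`, `λ = cos φ ∂/∂ϑ − cot ϑ sin φ ∂/∂φ`
has `g_{tφ} = g_{tϑ} = g_{rφ} = g_{rϑ} = g_{φϑ} = 0`, `g_{tt}, g_{tr}, g_{rr}` functions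
of `(t,r)` only, `g_{ϑϑ} = Q(t,r)`, and `g_{φφ} = Q(t,r) sin²ϑ`. -/
theorem rotation_invariant_tensor_form_4d
    (G : (Fin 4 → ℝ) → Matrix (Fin 4) (Fin 4) ℝ)
    (hsymm : ∀ p ∈ sphDom4, ∀ k l : Fin 4, G p k l = G p l k)
    (hdiff : ∀ k l, ∀ p ∈ sphDom4, DifferentiableAt ℝ (fun q => G q k l) p)
    (hξ : KillingEq4 G fun _ => ![0, 0, 1, 0])
    (hζ : KillingEq4 G fun p =>
      ![0, 0, -(Real.cos (p 3) / Real.sin (p 3)) * Real.cos (p 2), -Real.sin (p 2)])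
    (hlam : KillingEq4 G fun p =>
      ![0, 0, -(Real.cos (p 3) / Real.sin (p 3)) * Real.sin (p 2), Real.cos (p 2)]) :
    ∃ gtt gtr grr Q : ℝ → ℝ → ℝ, ∀ p ∈ sphDom4,
      G p 0 2 = 0 ∧ G p 0 3 = 0 ∧ G p 1 2 = 0 ∧ G p 1 3 = 0 ∧ G p 2 3 = 0 ∧
      G p 0 0 = gtt (p 0) (p 1) ∧
      G p 0 1 = gtr (p 0) (p 1) ∧
      G p 1 1 = grr (p 0) (p 1) ∧
      G p 3 3 = Q (p 0) (p 1) ∧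
      G p 2 2 = Q (p 0) (p 1) * Real.sin (p 3) ^ 2 := by
  have PF := pointwise_facts G hsymm hξ hζ hlam
  refine ⟨fun t r => G ![t, r, Real.pi, Real.pi / 2] 0 0,
    fun t r => G ![t, r, Real.pi, Real.pi / 2] 0 1,
    fun t r => G ![t, r, Real.pi, Real.pi / 2] 1 1,
    fun t r => G ![t, r, Real.pi, Real.pi / 2] 3 3, ?_⟩
  intro p hp
  obtain ⟨E2, ha02, ha03, ha12, ha13, ha23, ha22, hx00, hx01, hx11, hx33⟩ := PF p hp
  set q : Fin 4 → ℝ := ![p 0, p 1, Real.pi, Real.pi / 2] with hqdef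
  have hpi := Real.pi_pos
  have hq : q ∈ sphDom4 := by
    refine ⟨?_, ⟨?_, ?_⟩, ⟨?_, ?_⟩⟩ <;> simp [hqdef] <;> linarith [hp.1]
  have h00 : q 0 = p 0 := by simp [hqdef]
  have h11 : q 1 = p 1 := by simp [hqdef]
  have e00 : G q 0 0 = G p 0 0 :=
    const23 (fun x => G x 0 0) (hdiff 0 0) (fun x hx => (PF x hx).1 0 0)
      (fun x hx => (PF x hx).2.2.2.2.2.2.2.1) hp hq h00 h11
  have e01 : G q 0 1 = G p 0 1 :=
    const23 (fun x => G x 0 1) (hdiff 0 1) (fun x hx => (PF x hx).1 0 1)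
      (fun x hx => (PF x hx).2.2.2.2.2.2.2.2.1) hp hq h00 h11
  have e11 : G q 1 1 = G p 1 1 :=
    const23 (fun x => G x 1 1) (hdiff 1 1) (fun x hx => (PF x hx).1 1 1)
      (fun x hx => (PF x hx).2.2.2.2.2.2.2.2.2.1) hp hq h00 h11
  have e33 : G q 3 3 = G p 3 3 :=
    const23 (fun x => G x 3 3) (hdiff 3 3) (fun x hx => (PF x hx).1 3 3)
      (fun x hx => (PF x hx).2.2.2.2.2.2.2.2.2.2) hp hq h00 h11
  refine ⟨ha02, ha03, ha12, ha13, ha23, e00.symm, e01.symm, e11.symm, e33.symm, ?_⟩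
  rw [ha22]
  exact congrArg (fun x => x * Real.sin (p 3) ^ 2) e33.symm
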